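/- Let H be a Hopf algebra with invertible antipode, A a left H-module algebra, B = A#H. Suppose β : C → Z ⊗ H is a surjective B-module map admitting an A-linear section γ' (β∘γ' = id). Then the map γ : Z ⊗ H → C defined by γ(z ⊗ h) = h₍₂₎·γ'(S⁻¹(h₍₁₎)·z ⊗ 1) is a B-module section of β; in particular Z ⊗ H is a B-module direct summand of C. -/

import Mathlib

noncomputable section

namespace HopfAux

open TensorProduct Coalgebra

section Conv

variable {k : Type*} [CommSemiring k]
variable {C : Type*} [AddCommMonoid C] [Module k C] [Coalgebra k C]
variable {A : Type*} [Semiring A] [Algebra k A]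

/-- Convolution product on `C →ₗ[k] A`. -/
def conv (f g : C →ₗ[k] A) : C →ₗ[k] A :=
  LinearMap.mul' k A ∘ₗ TensorProduct.map f g ∘ₗ Coalgebra.comul

/-- Convolution unit. -/
def cunit : C →ₗ[k] A := Algebra.linearMap k A ∘ₗ Coalgebra.counit

lemma cunit_apply (c : C) : (cunit (k := k) (A := A)) c = algebraMap k A (counit c) := rfl

lemma conv_repr (f g : C →ₗ[k] A) {c : C} {ι : Type*} (r : Repr k c ι) :
    conv f g c = ∑ i ∈ r.index, f (r.left i) * g (r.right i) := by
  simp only [conv, LinearMap.comp_apply, ← r.eq, map_sum, TensorProduct.map_tmul,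
    LinearMap.mul'_apply]

lemma sum_counit_smul_right {c : C} {ι : Type*} (r : Repr k c ι) :
    ∑ i ∈ r.index, counit (R := k) (r.left i) • r.right i = c := by
  have h1 := sum_counit_tmul_eq (R := k) r
  calc ∑ i ∈ r.index, counit (R := k) (r.left i) • r.right i
      = TensorProduct.lid k C (∑ i ∈ r.index, counit (R := k) (r.left i) ⊗ₜ[k] r.right i) := by
        rw [map_sum]; simp only [TensorProduct.lid_tmul]
    _ = TensorProduct.lid k C ((1 : k) ⊗ₜ[k] c) := by rw [h1]
    _ = c := by simp

lemma sum_smul_counit_left {c : C} {ι : Type*} (r : Repr k c ι) :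
    ∑ i ∈ r.index, counit (R := k) (r.right i) • r.left i = c := by
  have h1 := sum_tmul_counit_eq (R := k) r
  calc ∑ i ∈ r.index, counit (R := k) (r.right i) • r.left i
      = TensorProduct.rid k C (∑ i ∈ r.index, r.left i ⊗ₜ[k] counit (R := k) (r.right i)) := by
        rw [map_sum]; simp only [TensorProduct.rid_tmul]
    _ = TensorProduct.rid k C (c ⊗ₜ[k] (1 : k)) := by rw [h1]
    _ = c := by simp

lemma conv_assoc (f g h : C →ₗ[k] A) : conv (conv f g) h = conv f (conv g h) := by
  ext c
  set r := ℛ k c with hr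
  set ρ : ∀ i : r.ι, Repr k (r.left i) (C × C) := fun i => ℛ k (r.left i) with hρ
  set σ : ∀ i : r.ι, Repr k (r.right i) (C × C) := fun i => ℛ k (r.right i) with hσ
  have key := Coalgebra.sum_tmul_tmul_eq r ρ σ
  set Φ : C ⊗[k] (C ⊗[k] C) →ₗ[k] A :=
    LinearMap.mul' k A ∘ₗ TensorProduct.map f
      (LinearMap.mul' k A ∘ₗ TensorProduct.map g h) with hΦ
  have key2 := congrArg Φ key
  simp only [map_sum, hΦ, LinearMap.comp_apply, TensorProduct.map_tmul,
    LinearMap.mul'_apply] at key2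
  calc conv (conv f g) h c = ∑ i ∈ r.index, conv f g (r.left i) * h (r.right i) :=
        conv_repr _ _ r
    _ = ∑ i ∈ r.index, ∑ j ∈ (ρ i).index,
          f ((ρ i).left j) * (g ((ρ i).right j) * h (r.right i)) := by
        refine Finset.sum_congr rfl fun i _ => ?_
        rw [conv_repr f g (ρ i), Finset.sum_mul]
        exact Finset.sum_congr rfl fun j _ => mul_assoc _ _ _
    _ = ∑ i ∈ r.index, ∑ j ∈ (σ i).index,
          f (r.left i) * (g ((σ i).left j) * h ((σ i).right j)) := key2
    _ = ∑ i ∈ r.index, f (r.left i) * conv g h (r.right i) := by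
        refine Finset.sum_congr rfl fun i _ => ?_
        rw [conv_repr g h (σ i), Finset.mul_sum]
    _ = conv f (conv g h) c := (conv_repr _ _ r).symm

lemma cunit_conv (f : C →ₗ[k] A) : conv cunit f = f := by
  ext c
  rw [conv_repr _ _ (ℛ k c)]
  calc ∑ i ∈ (ℛ k c).index, cunit ((ℛ k c).left i) * f ((ℛ k c).right i)
      = ∑ i ∈ (ℛ k c).index, f (counit (R := k) ((ℛ k c).left i) • (ℛ k c).right i) := by
        refine Finset.sum_congr rfl fun i _ => ?_
        rw [cunit_apply, ← Algebra.smul_def, map_smul]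
    _ = f c := by rw [← map_sum, sum_counit_smul_right]

lemma conv_cunit (f : C →ₗ[k] A) : conv f cunit = f := by
  ext c
  rw [conv_repr _ _ (ℛ k c)]
  calc ∑ i ∈ (ℛ k c).index, f ((ℛ k c).left i) * cunit ((ℛ k c).right i)
      = ∑ i ∈ (ℛ k c).index, f (counit (R := k) ((ℛ k c).right i) • (ℛ k c).left i) := by
        refine Finset.sum_congr rfl fun i _ => ?_
        rw [cunit_apply, ← Algebra.commutes, ← Algebra.smul_def, map_smul]
    _ = f c := by rw [← map_sum, sum_smul_counit_left]

lemma conv_sandwich {f g g' : C →ₗ[k] A} (h1 : conv f g = cunit) (h2 : conv g' f = cunit) :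
    g = g' := by
  have : conv g' (conv f g) = g' := by rw [h1, conv_cunit]
  rw [← conv_assoc, h2, cunit_conv] at this
  exact this

lemma conv_add_left (f f' g : C →ₗ[k] A) : conv (f + f') g = conv f g + conv f' g := by
  simp [conv, TensorProduct.map_add_left, LinearMap.comp_add, LinearMap.add_comp]

lemma conv_add_right (f g g' : C →ₗ[k] A) : conv f (g + g') = conv f g + conv f g' := by
  simp [conv, TensorProduct.map_add_right, LinearMap.comp_add, LinearMap.add_comp]

lemma conv_smul_left (c : k) (f g : C →ₗ[k] A) : conv (c • f) g = c • conv f g := by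
  simp [conv, TensorProduct.map_smul_left, LinearMap.comp_smul, LinearMap.smul_comp]

lemma conv_smul_right (c : k) (f g : C →ₗ[k] A) : conv f (c • g) = c • conv f g := by
  simp [conv, TensorProduct.map_smul_right, LinearMap.comp_smul, LinearMap.smul_comp]

lemma conv_zero_left (g : C →ₗ[k] A) : conv 0 g = 0 := by
  simp [conv]

lemma conv_zero_right (f : C →ₗ[k] A) : conv f 0 = 0 := by
  simp [conv]

end Conv

section ConvEnd

variable (k : Type*) [CommSemiring k]
variable (H : Type*) [Semiring H] [Bialgebra k H]

/-- Type synonym: `H →ₗ[k] H` carrying the convolution algebra structure. -/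
def ConvEnd : Type _ := H →ₗ[k] H

namespace ConvEnd

instance : AddCommMonoid (ConvEnd k H) := inferInstanceAs (AddCommMonoid (H →ₗ[k] H))
instance : Module k (ConvEnd k H) := inferInstanceAs (Module k (H →ₗ[k] H))

/-- Interpret an element of `ConvEnd` as a linear map. -/
def toLin (f : ConvEnd k H) : H →ₗ[k] H := f
/-- Interpret a linear map as an element of `ConvEnd`. -/
def ofLin (f : H →ₗ[k] H) : ConvEnd k H := f

variable {k H}

instance : Mul (ConvEnd k H) := ⟨fun f g => conv (C := H) (A := H) f g⟩
instance : One (ConvEnd k H) := ⟨(cunit : H →ₗ[k] H)⟩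

lemma mul_def (f g : ConvEnd k H) : f * g = conv (k := k) (toLin k H f) (toLin k H g) := rfl
lemma one_def : (1 : ConvEnd k H) = (cunit : H →ₗ[k] H) := rfl

instance : Semiring (ConvEnd k H) where
  mul_assoc := conv_assoc
  one_mul := cunit_conv
  mul_one := conv_cunit
  left_distrib := conv_add_right
  right_distrib f g h := conv_add_left f g h
  zero_mul := conv_zero_left
  mul_zero := conv_zero_right

instance : Algebra k (ConvEnd k H) :=
  Algebra.ofModule (fun c f g => conv_smul_left c f g) (fun c f g => conv_smul_right c f g)

lemma algebraMap_apply (c : k) :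
    (algebraMap k (ConvEnd k H) c) = c • (1 : ConvEnd k H) := rfl

end ConvEnd

end ConvEnd

section MulRepr

variable {k : Type*} [CommSemiring k]
variable {H : Type*} [Semiring H] [Bialgebra k H]

/-- A representation of `comul (a * b)` built from representations of `comul a`, `comul b`. -/
def mulRepr {a b : H} {ιa ιb : Type*} (ra : Coalgebra.Repr k a ιa) (rb : Coalgebra.Repr k b ιb) :
    Coalgebra.Repr k (a * b) (ιa × ιb) where
  index := ra.index ×ˢ rb.index
  left := fun p => ra.left p.1 * rb.left p.2
  right := fun p => ra.right p.1 * rb.right p.2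
  eq := by
    rw [Bialgebra.comul_mul, ← ra.eq, ← rb.eq, Finset.sum_mul_sum]
    rw [Finset.sum_product]
    exact Finset.sum_congr rfl fun i _ => Finset.sum_congr rfl fun j _ =>
      (Algebra.TensorProduct.tmul_mul_tmul _ _ _ _).symm

end MulRepr

section Antipode

variable {k : Type*} [CommSemiring k]
variable {H : Type*} [Semiring H] [HopfAlgebra k H]

open HopfAlgebra

local notation "S" => HopfAlgebra.antipode (R := k) (A := H)

lemma my_antipode_one : S (1 : H) = 1 := by
  have h := mul_antipode_rTensor_comul_apply (R := k) (1 : H)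
  rw [Bialgebra.comul_one, Algebra.TensorProduct.one_def] at h
  simpa using h

lemma my_counit_antipode (a : H) : counit (R := k) (S a) = counit (R := k) a := by
  set r := ℛ k a
  have h1 := congrArg (counit (R := k)) (sum_antipode_mul_eq_algebraMap_counit (R := k) r)
  rw [map_sum, Bialgebra.counit_algebraMap] at h1
  calc counit (R := k) (S a)
      = counit (R := k) (S (∑ i ∈ r.index, counit (R := k) (r.right i) • r.left i)) := by
        rw [sum_smul_counit_left]
    _ = ∑ i ∈ r.index, counit (R := k) (S (r.left i)) * counit (R := k) (r.right i) := by
        rw [map_sum, map_sum]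
        refine Finset.sum_congr rfl fun i _ => ?_
        rw [map_smul, map_smul, smul_eq_mul, mul_comm]
    _ = ∑ i ∈ r.index, counit (R := k) (S (r.left i) * r.right i) := by
        simp [Bialgebra.counit_mul]
    _ = counit (R := k) a := h1

/-- `F a = (b ↦ a * b)` as a map into the convolution algebra. -/
private def Fmul : H →ₗ[k] ConvEnd k H where
  toFun a := ConvEnd.ofLin k H (LinearMap.mulLeft k a)
  map_add' a a' := by
    show LinearMap.mulLeft k (a + a') = LinearMap.mulLeft k a + LinearMap.mulLeft k a'
    ext b; simp [add_mul]
  map_smul' c a := by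
    show LinearMap.mulLeft k (c • a) = c • LinearMap.mulLeft k a
    ext b; simp [smul_mul_assoc]

/-- `G a = (b ↦ S b * S a)`. -/
private def Gmul : H →ₗ[k] ConvEnd k H where
  toFun a := ConvEnd.ofLin k H ((LinearMap.mulRight k (S a)) ∘ₗ S)
  map_add' a a' := by
    show (LinearMap.mulRight k (S (a + a'))) ∘ₗ S
      = (LinearMap.mulRight k (S a)) ∘ₗ S + (LinearMap.mulRight k (S a')) ∘ₗ S
    ext b; simp [mul_add]
  map_smul' c a := by
    show (LinearMap.mulRight k (S (c • a))) ∘ₗ S = c • ((LinearMap.mulRight k (S a)) ∘ₗ S)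
    ext b; simp [mul_smul_comm]

/-- `G' a = (b ↦ S (a * b))`. -/
private def Gmul' : H →ₗ[k] ConvEnd k H where
  toFun a := ConvEnd.ofLin k H (S ∘ₗ LinearMap.mulLeft k a)
  map_add' a a' := by
    show S ∘ₗ LinearMap.mulLeft k (a + a')
      = S ∘ₗ LinearMap.mulLeft k a + S ∘ₗ LinearMap.mulLeft k a'
    ext b; simp [add_mul]
  map_smul' c a := by
    show S ∘ₗ LinearMap.mulLeft k (c • a) = c • (S ∘ₗ LinearMap.mulLeft k a)
    ext b; simp [smul_mul_assoc]

private lemma Fmul_apply (a b : H) : ConvEnd.toLin k H (Fmul a) b = a * b := rfl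

private lemma Gmul_apply (a b : H) : ConvEnd.toLin k H (Gmul a) b = S b * S a := rfl

private lemma Gmul'_apply (a b : H) : ConvEnd.toLin k H (Gmul' a) b = S (a * b) := rfl

private lemma convEnd_sum_apply {ι : Type*} (s : Finset ι) (f : ι → ConvEnd k H) (b : H) :
    ConvEnd.toLin k H (∑ i ∈ s, f i) b = ∑ i ∈ s, ConvEnd.toLin k H (f i) b := by
  induction s using Finset.cons_induction with
  | empty => simp; rfl
  | cons i s hi ih => rw [Finset.sum_cons, Finset.sum_cons, ← ih]; rfl

private lemma cunit_convEnd_apply (a b : H) :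
    ConvEnd.toLin k H ((cunit : H →ₗ[k] ConvEnd k H) a) b
      = algebraMap k H (counit (R := k) a * counit (R := k) b) := by
  show ConvEnd.toLin k H (algebraMap k (ConvEnd k H) (counit (R := k) a)) b = _
  rw [ConvEnd.algebraMap_apply]
  show (counit (R := k) a • (cunit : H →ₗ[k] H)) b = _
  rw [LinearMap.smul_apply, cunit_apply, map_mul, Algebra.smul_def]

lemma my_antipode_mul (a b : H) : S (a * b) = S b * S a := by
  have claim1 : conv (Fmul (k := k) (H := H)) Gmul = cunit := by
    refine LinearMap.ext fun a => LinearMap.ext fun b => ?_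
    show ConvEnd.toLin k H (conv Fmul Gmul a) b = ConvEnd.toLin k H ((cunit : H →ₗ[k] ConvEnd k H) a) b
    set r := ℛ k a
    set rb := ℛ k b
    have expand : ConvEnd.toLin k H (conv Fmul Gmul a) b
        = ∑ i ∈ r.index, ∑ j ∈ rb.index,
            (r.left i * rb.left j) * (S (rb.right j) * S (r.right i)) := by
      rw [conv_repr _ _ r, convEnd_sum_apply]
      refine Finset.sum_congr rfl fun i _ => ?_
      show conv (ConvEnd.toLin k H (Fmul (r.left i))) (ConvEnd.toLin k H (Gmul (r.right i))) b = _
      rw [conv_repr _ _ rb]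
      exact Finset.sum_congr rfl fun j _ => by rw [Fmul_apply, Gmul_apply]
    have step : ∀ i, ∑ j ∈ rb.index,
        (r.left i * rb.left j) * (S (rb.right j) * S (r.right i))
        = counit (R := k) b • (r.left i * S (r.right i)) := by
      intro i
      calc ∑ j ∈ rb.index, (r.left i * rb.left j) * (S (rb.right j) * S (r.right i))
          = r.left i * ((∑ j ∈ rb.index, rb.left j * S (rb.right j)) * S (r.right i)) := by
            rw [Finset.sum_mul, Finset.mul_sum]
            refine Finset.sum_congr rfl fun j _ => ?_
            rw [mul_assoc (r.left i), mul_assoc (rb.left j)]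
        _ = r.left i * (algebraMap k H (counit (R := k) b) * S (r.right i)) := by
            rw [sum_mul_antipode_eq_algebraMap_counit]
        _ = counit (R := k) b • (r.left i * S (r.right i)) := by
            rw [← Algebra.smul_def, mul_smul_comm]
    calc ConvEnd.toLin k H (conv Fmul Gmul a) b
        = ∑ i ∈ r.index, counit (R := k) b • (r.left i * S (r.right i)) := by
          rw [expand]; exact Finset.sum_congr rfl fun i _ => step i
      _ = counit (R := k) b • algebraMap k H (counit (R := k) a) := by
          rw [← Finset.smul_sum, sum_mul_antipode_eq_algebraMap_counit]
      _ = ConvEnd.toLin k H ((cunit : H →ₗ[k] ConvEnd k H) a) b := by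
          rw [cunit_convEnd_apply, Algebra.smul_def, ← map_mul, mul_comm]
  have claim2 : conv (Gmul' (k := k) (H := H)) Fmul = cunit := by
    refine LinearMap.ext fun a => LinearMap.ext fun b => ?_
    show ConvEnd.toLin k H (conv Gmul' Fmul a) b = ConvEnd.toLin k H ((cunit : H →ₗ[k] ConvEnd k H) a) b
    set r := ℛ k a
    set rb := ℛ k b
    have expand : ConvEnd.toLin k H (conv Gmul' Fmul a) b
        = ∑ i ∈ r.index, ∑ j ∈ rb.index,
            S (r.left i * rb.left j) * (r.right i * rb.right j) := by
      rw [conv_repr _ _ r, convEnd_sum_apply]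
      refine Finset.sum_congr rfl fun i _ => ?_
      show conv (ConvEnd.toLin k H (Gmul' (r.left i))) (ConvEnd.toLin k H (Fmul (r.right i))) b = _
      rw [conv_repr _ _ rb]
      exact Finset.sum_congr rfl fun j _ => by rw [Gmul'_apply, Fmul_apply]
    rw [expand, cunit_convEnd_apply, ← Bialgebra.counit_mul, ← Finset.sum_product']
    exact sum_antipode_mul_eq_algebraMap_counit (R := k) (mulRepr r rb)
  have final : Gmul (k := k) (H := H) = Gmul' := conv_sandwich claim1 claim2
  have h2 : ConvEnd.toLin k H (Gmul a) = ConvEnd.toLin k H (Gmul' a) := by rw [final]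
  have h3 := LinearMap.congr_fun h2 b
  rw [Gmul_apply, Gmul'_apply] at h3
  exact h3.symm

end Antipode

section AntipodeComul

variable {k : Type*} [CommSemiring k]
variable {H : Type*} [Semiring H] [HopfAlgebra k H]

open HopfAlgebra

local notation "S" => HopfAlgebra.antipode (R := k) (A := H)

/-- The candidate `a ↦ ∑ S a₂ ⊗ S a₁` for `comul ∘ S`. -/
private def gACm : H →ₗ[k] H ⊗[k] H :=
  (TensorProduct.map S S) ∘ₗ (TensorProduct.comm k H H).toLinearMap ∘ₗ Coalgebra.comul

private lemma gACm_repr {x : H} {ι : Type*} (rx : Coalgebra.Repr k x ι) :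
    gACm (k := k) (H := H) x = ∑ j ∈ rx.index, S (rx.right j) ⊗ₜ[k] S (rx.left j) := by
  rw [gACm, LinearMap.comp_apply, LinearMap.comp_apply, ← rx.eq, map_sum, map_sum]
  simp only [LinearEquiv.coe_coe, TensorProduct.comm_tmul, TensorProduct.map_tmul]

/-- `x ↦ S x ⊗ 1`. -/
private def jS : H →ₗ[k] H ⊗[k] H := ((TensorProduct.mk k H H).flip 1) ∘ₗ S

private lemma jS_apply (x : H) : jS (k := k) (H := H) x = S x ⊗ₜ[k] (1 : H) := rfl

private lemma helper1 (x : H) (t : H ⊗[k] H) :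
    ((S x) ⊗ₜ[k] (1 : H)) * t
      = (LinearMap.rTensor H (LinearMap.mul' k H ∘ₗ LinearMap.rTensor H S))
          ((TensorProduct.assoc k H H H).symm (x ⊗ₜ[k] t)) := by
  induction t with
  | zero => simp
  | tmul u v =>
      simp [TensorProduct.assoc_symm_tmul, Algebra.TensorProduct.tmul_mul_tmul]
  | add t₁ t₂ h₁ h₂ =>
      rw [TensorProduct.tmul_add, map_add, map_add, mul_add, h₁, h₂]

private lemma Wlem (c : H) :
    LinearMap.mul' k (H ⊗[k] H)
      (TensorProduct.map (jS (k := k) (H := H)) Coalgebra.comul (Coalgebra.comul c))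
      = (1 : H) ⊗ₜ[k] c := by
  set r := ℛ k c
  have step1 : TensorProduct.map (jS (k := k) (H := H)) Coalgebra.comul (Coalgebra.comul c)
      = ∑ i ∈ r.index, ((S (r.left i)) ⊗ₜ[k] (1 : H)) ⊗ₜ[k]
          (Coalgebra.comul (R := k) (r.right i)) := by
    rw [← r.eq, map_sum]
    simp only [TensorProduct.map_tmul, jS_apply]
  rw [step1, map_sum]
  have step2 : ∀ i ∈ r.index,
      LinearMap.mul' k (H ⊗[k] H)
        (((S (r.left i)) ⊗ₜ[k] (1 : H)) ⊗ₜ[k] (Coalgebra.comul (R := k) (r.right i)))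
      = (LinearMap.rTensor H (LinearMap.mul' k H ∘ₗ LinearMap.rTensor H S))
          ((TensorProduct.assoc k H H H).symm
            (r.left i ⊗ₜ[k] (Coalgebra.comul (R := k) (r.right i)))) := by
    intro i _
    rw [LinearMap.mul'_apply, helper1]
  rw [Finset.sum_congr rfl step2, ← map_sum, ← map_sum]
  have step3 : (∑ i ∈ r.index, r.left i ⊗ₜ[k] (Coalgebra.comul (R := k) (r.right i)))
      = LinearMap.lTensor H (Coalgebra.comul (R := k)) (Coalgebra.comul c) := by
    rw [← r.eq, map_sum]
    simp only [LinearMap.lTensor_tmul]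
  rw [step3, Coalgebra.coassoc_symm_apply, ← LinearMap.rTensor_comp_apply]
  rw [← r.eq, map_sum]
  simp only [LinearMap.rTensor_tmul, LinearMap.comp_apply]
  calc ∑ i ∈ r.index,
        (LinearMap.mul' k H) ((LinearMap.rTensor H S) (Coalgebra.comul (r.left i))) ⊗ₜ[k] r.right i
      = ∑ i ∈ r.index, ((counit (R := k) (r.left i)) • (1 : H)) ⊗ₜ[k] r.right i := by
        refine Finset.sum_congr rfl fun i _ => ?_
        rw [mul_antipode_rTensor_comul_apply, Algebra.algebraMap_eq_smul_one]
    _ = (1 : H) ⊗ₜ[k] (∑ i ∈ r.index, counit (R := k) (r.left i) • r.right i) := by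
        rw [TensorProduct.tmul_sum]
        exact Finset.sum_congr rfl fun i _ => by rw [TensorProduct.smul_tmul]
    _ = (1 : H) ⊗ₜ[k] c := by rw [sum_counit_smul_right]

lemma my_comul_antipode (a : H) :
    Coalgebra.comul (R := k) (S a)
      = TensorProduct.map S S ((TensorProduct.comm k H H) (Coalgebra.comul a)) := by
  have claim1 : conv (Coalgebra.comul (R := k) (A := H)) ((Coalgebra.comul (R := k)) ∘ₗ S)
      = cunit := by
    ext c
    set r := ℛ k c
    rw [conv_repr _ _ r, cunit_apply]
    calc ∑ i ∈ r.index,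
          Coalgebra.comul (R := k) (r.left i) * (Coalgebra.comul ∘ₗ S) (r.right i)
        = ∑ i ∈ r.index, Coalgebra.comul (R := k) (r.left i * S (r.right i)) := by
          refine Finset.sum_congr rfl fun i _ => ?_
          rw [LinearMap.comp_apply, ← Bialgebra.comul_mul]
      _ = Coalgebra.comul (R := k) (∑ i ∈ r.index, r.left i * S (r.right i)) := by
          rw [map_sum]
      _ = algebraMap k (H ⊗[k] H) (counit (R := k) c) := by
          rw [sum_mul_antipode_eq_algebraMap_counit, Bialgebra.comul_algebraMap]
  have claim2 : conv (gACm (k := k) (H := H)) (Coalgebra.comul (R := k)) = cunit := by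
    ext c
    set r := ℛ k c with hr
    set ρ : ∀ i : r.ι, Coalgebra.Repr k (r.left i) (H × H) := fun i => ℛ k (r.left i) with hρ
    set σ : ∀ i : r.ι, Coalgebra.Repr k (r.right i) (H × H) := fun i => ℛ k (r.right i) with hσ
    set L : H ⊗[k] (H ⊗[k] H) →ₗ[k] H ⊗[k] H :=
      LinearMap.mul' k (H ⊗[k] H)
        ∘ₗ TensorProduct.map ((TensorProduct.map S S) ∘ₗ (TensorProduct.comm k H H).toLinearMap)
            (Coalgebra.comul (R := k))
        ∘ₗ (TensorProduct.assoc k H H H).symm.toLinearMap with hL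
    have L_apply : ∀ (x y w : H),
        L (x ⊗ₜ[k] (y ⊗ₜ[k] w)) = (S y ⊗ₜ[k] S x) * Coalgebra.comul (R := k) w := by
      intro x y w
      simp only [hL, LinearMap.comp_apply, LinearEquiv.coe_coe, TensorProduct.assoc_symm_tmul,
        TensorProduct.map_tmul, TensorProduct.comm_tmul, LinearMap.mul'_apply]
    have key := congrArg L (Coalgebra.sum_tmul_tmul_eq r ρ σ)
    simp only [map_sum] at key
    rw [conv_repr _ _ r, cunit_apply]
    calc ∑ i ∈ r.index, gACm (k := k) (H := H) (r.left i) * Coalgebra.comul (R := k) (r.right i)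
        = ∑ i ∈ r.index, ∑ j ∈ (ρ i).index,
            L ((ρ i).left j ⊗ₜ[k] ((ρ i).right j ⊗ₜ[k] r.right i)) := by
          refine Finset.sum_congr rfl fun i _ => ?_
          rw [gACm_repr (ρ i), Finset.sum_mul]
          exact Finset.sum_congr rfl fun j _ => (L_apply _ _ _).symm
      _ = ∑ i ∈ r.index, ∑ m ∈ (σ i).index,
            L (r.left i ⊗ₜ[k] ((σ i).left m ⊗ₜ[k] (σ i).right m)) := key
      _ = ∑ i ∈ r.index, ((1 : H) ⊗ₜ[k] S (r.left i)) *
            ∑ m ∈ (σ i).index, ((S ((σ i).left m)) ⊗ₜ[k] (1 : H))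
              * Coalgebra.comul (R := k) ((σ i).right m) := by
          refine Finset.sum_congr rfl fun i _ => ?_
          rw [Finset.mul_sum]
          refine Finset.sum_congr rfl fun m _ => ?_
          rw [L_apply]
          have : (S ((σ i).left m) ⊗ₜ[k] S (r.left i))
              = ((1 : H) ⊗ₜ[k] S (r.left i)) * ((S ((σ i).left m)) ⊗ₜ[k] (1 : H)) := by
            rw [Algebra.TensorProduct.tmul_mul_tmul, one_mul, mul_one]
          rw [this, mul_assoc]
      _ = ∑ i ∈ r.index, ((1 : H) ⊗ₜ[k] S (r.left i)) * ((1 : H) ⊗ₜ[k] r.right i) := by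
          refine Finset.sum_congr rfl fun i _ => ?_
          congr 1
          have expand : TensorProduct.map (jS (k := k) (H := H)) (Coalgebra.comul (R := k))
              (Coalgebra.comul (R := k) (r.right i))
              = ∑ m ∈ (σ i).index, ((S ((σ i).left m)) ⊗ₜ[k] (1 : H)) ⊗ₜ[k]
                  (Coalgebra.comul (R := k) ((σ i).right m)) := by
            rw [← (σ i).eq, map_sum]
            simp only [TensorProduct.map_tmul, jS_apply]
          have := Wlem (k := k) (r.right i)
          rw [expand, map_sum] at this
          rw [← this]
          exact Finset.sum_congr rfl fun m _ => by rw [LinearMap.mul'_apply]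
      _ = algebraMap k (H ⊗[k] H) (counit (R := k) c) := by
          calc ∑ i ∈ r.index, ((1 : H) ⊗ₜ[k] S (r.left i)) * ((1 : H) ⊗ₜ[k] r.right i)
              = (1 : H) ⊗ₜ[k] (∑ i ∈ r.index, S (r.left i) * r.right i) := by
                rw [TensorProduct.tmul_sum]
                exact Finset.sum_congr rfl fun i _ => by
                  rw [Algebra.TensorProduct.tmul_mul_tmul, one_mul]
            _ = (1 : H) ⊗ₜ[k] algebraMap k H (counit (R := k) c) := by
                rw [sum_antipode_mul_eq_algebraMap_counit]
            _ = algebraMap k (H ⊗[k] H) (counit (R := k) c) := by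
                rw [Algebra.TensorProduct.algebraMap_apply']
  have final : (Coalgebra.comul (R := k)) ∘ₗ S = gACm (k := k) (H := H) :=
    conv_sandwich claim1 claim2
  have := LinearMap.congr_fun final a
  rw [LinearMap.comp_apply] at this
  rw [this, gACm]
  simp only [LinearMap.comp_apply, LinearEquiv.coe_coe]

end AntipodeComul

section SinvLemmas

variable {k : Type*} [CommSemiring k]
variable {H : Type*} [Semiring H] [HopfAlgebra k H]

open HopfAlgebra

local notation "S" => HopfAlgebra.antipode (R := k) (A := H)

variable (Sinv : H →ₗ[k] H)

lemma Sinv_one (hS₂ : ∀ h : H, S (Sinv h) = h) (hS₁ : ∀ h : H, Sinv (S h) = h) :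
    Sinv (1 : H) = 1 := by
  conv_lhs => rw [← my_antipode_one (k := k) (H := H)]
  exact hS₁ 1

lemma Sinv_mul (hS₁ : ∀ h : H, Sinv (S h) = h) (hS₂ : ∀ h : H, S (Sinv h) = h)
    (a b : H) : Sinv (a * b) = Sinv b * Sinv a := by
  have hinj : Function.Injective (S : H → H) := fun x y hxy => by
    rw [← hS₁ x, ← hS₁ y, hxy]
  apply hinj
  rw [hS₂, my_antipode_mul, hS₂, hS₂]

lemma counit_Sinv (hS₂ : ∀ h : H, S (Sinv h) = h) (a : H) :
    counit (R := k) (Sinv a) = counit (R := k) a := by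
  conv_rhs => rw [← hS₂ a]
  rw [my_counit_antipode]

lemma comul_Sinv (hS₁ : ∀ h : H, Sinv (S h) = h) (hS₂ : ∀ h : H, S (Sinv h) = h) (a : H) :
    Coalgebra.comul (R := k) (Sinv a)
      = TensorProduct.map Sinv Sinv ((TensorProduct.comm k H H) (Coalgebra.comul a)) := by
  have inv_id : ∀ t : H ⊗[k] H,
      TensorProduct.map Sinv Sinv ((TensorProduct.comm k H H)
        (TensorProduct.map S S ((TensorProduct.comm k H H) t))) = t := by
    intro t
    induction t with
    | zero => simp
    | tmul x y => simp [TensorProduct.comm_tmul, TensorProduct.map_tmul, hS₁]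
    | add t₁ t₂ h₁ h₂ => rw [map_add, map_add, map_add, map_add, h₁, h₂]
  conv_rhs => rw [← hS₂ a, my_comul_antipode, inv_id]

/-- From a representation of `comul a`, a representation of `comul (Sinv a)`. -/
def SinvRepr (hS₁ : ∀ h : H, Sinv (S h) = h) (hS₂ : ∀ h : H, S (Sinv h) = h)
    {a : H} {ι : Type*} (r : Coalgebra.Repr k a ι) : Coalgebra.Repr k (Sinv a) ι where
  index := r.index
  left := fun i => Sinv (r.right i)
  right := fun i => Sinv (r.left i)
  eq := by
    rw [comul_Sinv (k := k) Sinv hS₁ hS₂, ← r.eq, map_sum, map_sum]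
    simp only [TensorProduct.comm_tmul, TensorProduct.map_tmul]

lemma sum_mul_Sinv (hS₁ : ∀ h : H, Sinv (S h) = h) (hS₂ : ∀ h : H, S (Sinv h) = h)
    {a : H} {ι : Type*} (r : Coalgebra.Repr k a ι) :
    ∑ i ∈ r.index, r.right i * Sinv (r.left i) = algebraMap k H (counit (R := k) a) := by
  have h := sum_antipode_mul_eq_algebraMap_counit (R := k) (SinvRepr Sinv hS₁ hS₂ r)
  simp only [SinvRepr, hS₂] at h
  rw [h, counit_Sinv Sinv hS₂]

lemma sum_Sinv_mul (hS₁ : ∀ h : H, Sinv (S h) = h) (hS₂ : ∀ h : H, S (Sinv h) = h)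
    {a : H} {ι : Type*} (r : Coalgebra.Repr k a ι) :
    ∑ i ∈ r.index, Sinv (r.right i) * r.left i = algebraMap k H (counit (R := k) a) := by
  have h := sum_mul_antipode_eq_algebraMap_counit (R := k) (SinvRepr Sinv hS₁ hS₂ r)
  simp only [SinvRepr, hS₂] at h
  rw [h, counit_Sinv Sinv hS₂]

end SinvLemmas

end HopfAux

end



open TensorProduct

noncomputable section

namespace Hopfological

variable (k : Type*) [Field k]

/-- The scalar action of a `k`-algebra `R` on a module `M`, as a `k`-bilinear map. -/
def actL (R M : Type*) [Ring R] [Algebra k R] [AddCommGroup M] [Module k M]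
    [Module R M] [IsScalarTower k R M] [SMulCommClass k R M] :
    R →ₗ[k] M →ₗ[k] M :=
  LinearMap.mk₂ k (· • ·) (fun r r' m => add_smul r r' m) (fun c r m => smul_assoc c r m)
    (fun r m m' => smul_add r m m') (fun c r m => (smul_comm c r m).symm)

@[simp] lemma actL_apply (R M : Type*) [Ring R] [Algebra k R] [AddCommGroup M] [Module k M]
    [Module R M] [IsScalarTower k R M] [SMulCommClass k R M] (r : R) (m : M) :
    actL k R M r m = r • m := rfl

variable (H : Type*) [Ring H] [HopfAlgebra k H]

/-- The diagonal (Sweedler) action of `H` on a tensor product, built from two given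
`k`-linear actions `ρM`, `ρN`:  `h • (m ⊗ n) = ∑ ρM h₁ m ⊗ ρN h₂ n`. -/
def tenActVia {M N : Type*} [AddCommGroup M] [Module k M] [AddCommGroup N] [Module k N]
    (ρM : H →ₗ[k] M →ₗ[k] M) (ρN : H →ₗ[k] N →ₗ[k] N) :
    H →ₗ[k] (M ⊗[k] N) →ₗ[k] (M ⊗[k] N) :=
  (TensorProduct.lift (((TensorProduct.mapBilinear (RingHom.id k) M N M N).comp ρM).compl₂ ρN)).comp
    (Coalgebra.comul (R := k))

/-- The conjugation (Sweedler) action of `H` on `k`-linear maps: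
`(h • f) m = ∑ ρN h₂ (f (ρM (S⁻¹ h₁) m))`. -/
def conjAct (Sinv : H →ₗ[k] H) {M N : Type*} [AddCommGroup M] [Module k M]
    [AddCommGroup N] [Module k N]
    (ρM : H →ₗ[k] M →ₗ[k] M) (ρN : H →ₗ[k] N →ₗ[k] N) :
    H →ₗ[k] (M →ₗ[k] N) →ₗ[k] (M →ₗ[k] N) :=
  (TensorProduct.lift (LinearMap.mk₂ k
      (fun h₁ h₂ => (LinearMap.llcomp k M N N (ρN h₂)).comp
        (LinearMap.lcomp k N (ρM (Sinv h₁))))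
      (fun h₁ h₁' h₂ => by ext f m; simp)
      (fun c h₁ h₂ => by ext f m; simp)
      (fun h₁ h₂ h₂' => by ext f m; simp)
      (fun c h₁ h₂ => by ext f m; simp))).comp (Coalgebra.comul (R := k))

/-- `A` is a left `H`-module algebra with respect to the action `ρ`. -/
def IsModuleAlgebraVia (A : Type*) [Ring A] [Algebra k A]
    (ρ : H →ₗ[k] A →ₗ[k] A) : Prop :=
  (∀ (h h' : H) (a : A), ρ (h * h') a = ρ h (ρ h' a)) ∧
  (∀ a : A, ρ 1 a = a) ∧
  (∀ (h : H) (a b : A),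
    ρ h (a * b) = LinearMap.mul' k A (tenActVia k H ρ ρ h (a ⊗ₜ[k] b))) ∧
  (∀ h : H, ρ h 1 = Coalgebra.counit (R := k) h • (1 : A))

/-- `M` is a module over the smash product `A#H`: the `H`- and `A`-actions satisfy
`h • (a • m) = ∑ (h₁ • a) • (h₂ • m)`. -/
def IsSmashModule (A M : Type*) [Ring A] [Algebra k A] [AddCommGroup M] [Module k M]
    [Module A M] [IsScalarTower k A M] [SMulCommClass k A M]
    [Module H A] [IsScalarTower k H A] [SMulCommClass k H A]
    [Module H M] [IsScalarTower k H M] [SMulCommClass k H M] : Prop :=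
  ∀ (h : H) (a : A) (m : M),
    h • (a • m) =
      TensorProduct.lift
        (LinearMap.mk₂ k (· • ·) (fun a a' m => add_smul a a' m)
          (fun c a m => smul_assoc c a m) (fun a m m' => smul_add a m m')
          (fun c a m => (smul_comm c a m).symm))
        (tenActVia k H (actL k H A) (actL k H M) h (a ⊗ₜ[k] m))


variable (A : Type*) [Ring A] [Algebra k A]
  [Module H A] [IsScalarTower k H A] [SMulCommClass k H A]
variable (C Z : Type*) [AddCommGroup C] [Module k C]
  [Module A C] [IsScalarTower k A C] [SMulCommClass k A C]
  [Module H C] [IsScalarTower k H C] [SMulCommClass k H C]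
  [AddCommGroup Z] [Module k Z]
  [Module A Z] [IsScalarTower k A Z] [SMulCommClass k A Z]
  [Module H Z] [IsScalarTower k H Z] [SMulCommClass k H Z]

/-- The `B`-linear section `γ : Z ⊗ H → C`, `γ(z ⊗ h) = ∑ h₂ • γ'((S⁻¹(h₁) • z) ⊗ 1)`,
built from an `A`-linear section `γ'`. -/
def gammaMap (Sinv : H →ₗ[k] H) (γ' : Z ⊗[k] H →ₗ[k] C) : Z ⊗[k] H →ₗ[k] C :=
  TensorProduct.lift
    ((TensorProduct.lift
        (LinearMap.mk₂ k
          (fun h₁ h₂ =>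
            (actL k H C h₂) ∘ₗ γ' ∘ₗ ((TensorProduct.mk k Z H).flip 1)
              ∘ₗ (actL k H Z (Sinv h₁)))
          (fun h₁ h₁' h₂ => by ext z; simp [TensorProduct.add_tmul])
          (fun c h₁ h₂ => by
            ext z
            simp only [LinearMap.coe_comp, Function.comp_apply, actL_apply,
              LinearMap.flip_apply, TensorProduct.mk_apply, map_smul, smul_assoc,
              LinearMap.smul_apply]
            )
          (fun h₁ h₂ h₂' => by ext z; simp)
          (fun c h₁ h₂ => by ext z; simp)) ∘ₗ (Coalgebra.comul (R := k))).flip)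

open Coalgebra in
lemma tenActVia_repr {M N : Type*} [AddCommGroup M] [Module k M] [AddCommGroup N] [Module k N]
    (ρM : H →ₗ[k] M →ₗ[k] M) (ρN : H →ₗ[k] N →ₗ[k] N) {h : H} {ι : Type*} (r : Coalgebra.Repr k h ι)
    (m : M) (n : N) :
    tenActVia k H ρM ρN h (m ⊗ₜ[k] n)
      = ∑ i ∈ r.index, ρM (r.left i) m ⊗ₜ[k] ρN (r.right i) n := by
  rw [tenActVia]
  simp only [LinearMap.comp_apply]
  rw [← r.eq, map_sum, LinearMap.sum_apply]
  simp only [TensorProduct.lift.tmul, LinearMap.compl₂_apply, LinearMap.comp_apply,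
    TensorProduct.mapBilinear_apply, TensorProduct.map_tmul]

open Coalgebra in
lemma gammaMap_repr (Sinv : H →ₗ[k] H) (γ' : Z ⊗[k] H →ₗ[k] C) (z : Z) {h : H}
    {ι : Type*} (r : Coalgebra.Repr k h ι) :
    gammaMap k H C Z Sinv γ' (z ⊗ₜ[k] h)
      = ∑ i ∈ r.index, r.right i • γ' ((Sinv (r.left i) • z) ⊗ₜ[k] (1 : H)) := by
  rw [gammaMap]
  simp only [TensorProduct.lift.tmul, LinearMap.flip_apply, LinearMap.comp_apply]
  rw [← r.eq, map_sum, LinearMap.sum_apply]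
  simp only [TensorProduct.lift.tmul, LinearMap.mk₂_apply, LinearMap.comp_apply,
    actL_apply, LinearMap.flip_apply, TensorProduct.mk_apply]

open Coalgebra in
lemma smash_repr {M : Type*} [AddCommGroup M] [Module k M]
    [Module A M] [IsScalarTower k A M] [SMulCommClass k A M]
    [Module H M] [IsScalarTower k H M] [SMulCommClass k H M]
    (hsm : IsSmashModule k H A M) {h : H} {ι : Type*} (r : Coalgebra.Repr k h ι) (a : A) (m : M) :
    h • (a • m) = ∑ i ∈ r.index, (r.left i • a) • (r.right i • m) := by
  rw [hsm h a m, tenActVia_repr k H _ _ r, map_sum]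
  simp only [TensorProduct.lift.tmul, LinearMap.mk₂_apply, actL_apply]

/-- If `β : C → Z ⊗ H` is a surjective `B = A#H`-module map admitting an
`A`-linear section `γ'`, then `γ(z ⊗ h) = ∑ h₂ • γ'((S⁻¹(h₁) • z) ⊗ 1)` is a `B`-module
section of `β`; in particular `Z ⊗ H` is a `B`-module direct summand of `C`. -/
theorem gammaMap_B_section
    (Sinv : H →ₗ[k] H)
    (hS₁ : ∀ h : H, Sinv (HopfAlgebra.antipode (R := k) h) = h)
    (hS₂ : ∀ h : H, HopfAlgebra.antipode (R := k) (Sinv h) = h)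
    (hA : IsModuleAlgebraVia k H A (actL k H A))
    (hC : IsSmashModule k H A C) (hZ : IsSmashModule k H A Z)
    (β : C →ₗ[k] Z ⊗[k] H)
    (hβA : ∀ (a : A) (c : C),
        β (a • c) = TensorProduct.map (actL k A Z a) LinearMap.id (β c))
    (hβH : ∀ (h : H) (c : C),
        β (h • c) = tenActVia k H (actL k H Z) (actL k H H) h (β c))
    (hβsurj : Function.Surjective β)
    (γ' : Z ⊗[k] H →ₗ[k] C)
    (hγ'A : ∀ (a : A) (x : Z ⊗[k] H),
        γ' (TensorProduct.map (actL k A Z a) LinearMap.id x) = a • γ' x)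
    (hsec : ∀ x : Z ⊗[k] H, β (γ' x) = x) :
    (∀ (a : A) (x : Z ⊗[k] H),
        gammaMap k H C Z Sinv γ' (TensorProduct.map (actL k A Z a) LinearMap.id x)
          = a • gammaMap k H C Z Sinv γ' x) ∧
    (∀ (h : H) (x : Z ⊗[k] H),
        gammaMap k H C Z Sinv γ' (tenActVia k H (actL k H Z) (actL k H H) h x)
          = h • gammaMap k H C Z Sinv γ' x) ∧
    (∀ x : Z ⊗[k] H, β (gammaMap k H C Z Sinv γ' x) = x) := by
  obtain ⟨S, hSa⟩ : ∃ S : H →ₗ[k] H, S = HopfAlgebra.antipode (R := k) (A := H) := ⟨_, rfl⟩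
  have hS₁' : ∀ h : H, Sinv (HopfAlgebra.antipode (R := k) h) = h := hS₁
  have hS₂' : ∀ h : H, HopfAlgebra.antipode (R := k) (Sinv h) = h := hS₂
  refine ⟨?_, ?_, ?_⟩
  · -- A-linearity
    intro a x
    induction x using TensorProduct.induction_on with
    | zero => simp
    | add u v hu hv => rw [map_add, map_add, hu, hv, map_add, smul_add]
    | tmul z h =>
      rw [TensorProduct.map_tmul, LinearMap.id_coe, id_eq, actL_apply]
      set r := Coalgebra.Repr.arbitrary k h with hrdef
      set ρ : ∀ i : r.ι, Coalgebra.Repr k (r.left i) (H × H) :=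
        fun i => Coalgebra.Repr.arbitrary k (r.left i) with hρdef
      set σ : ∀ i : r.ι, Coalgebra.Repr k (r.right i) (H × H) :=
        fun i => Coalgebra.Repr.arbitrary k (r.right i) with hσdef
      rw [gammaMap_repr k H C Z Sinv γ' (a • z) r, gammaMap_repr k H C Z Sinv γ' z r]
      set cmap : H →ₗ[k] C :=
        γ' ∘ₗ ((TensorProduct.mk k Z H).flip 1) ∘ₗ ((actL k H Z).flip z) ∘ₗ Sinv with hcmap
      have cmap_apply : ∀ x : H, cmap x = γ' ((Sinv x • z) ⊗ₜ[k] (1 : H)) := fun x => rfl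
      set inner1 : H ⊗[k] H →ₗ[k] H :=
        LinearMap.mul' k H ∘ₗ (TensorProduct.comm k H H).toLinearMap
          ∘ₗ LinearMap.rTensor H Sinv with hinner1
      set φ' : H ⊗[k] H →ₗ[k] H ⊗[k] H :=
        (LinearMap.rTensor H inner1) ∘ₗ (TensorProduct.assoc k H H H).symm.toLinearMap
          ∘ₗ LinearMap.lTensor H (Coalgebra.comul (R := k)) with hφ'
      have φ'_tmul : ∀ (y w : H) (rw : Coalgebra.Repr k w (H × H)),
          φ' (y ⊗ₜ[k] w) = ∑ m ∈ rw.index, (rw.left m * Sinv y) ⊗ₜ[k] rw.right m := by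
        intro y w rw
        rw [hφ']
        simp only [LinearMap.comp_apply]
        rw [LinearMap.lTensor_tmul, ← rw.eq, TensorProduct.tmul_sum, map_sum, map_sum]
        refine Finset.sum_congr rfl fun m _ => ?_
        rw [LinearEquiv.coe_coe, TensorProduct.assoc_symm_tmul, LinearMap.rTensor_tmul]
        rw [hinner1]
        simp only [LinearMap.comp_apply, LinearMap.rTensor_tmul, LinearEquiv.coe_coe,
          TensorProduct.comm_tmul, LinearMap.mul'_apply]
      have innercomul : ∀ x : H,
          inner1 (Coalgebra.comul (R := k) x) = algebraMap k H (Coalgebra.counit (R := k) x) := by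
        intro x
        set rx := Coalgebra.Repr.arbitrary k x
        rw [← rx.eq, map_sum]
        have : ∀ m ∈ rx.index, inner1 (rx.left m ⊗ₜ[k] rx.right m)
            = rx.right m * Sinv (rx.left m) := by
          intro m _
          rw [hinner1]
          simp only [LinearMap.comp_apply, LinearMap.rTensor_tmul, LinearEquiv.coe_coe,
            TensorProduct.comm_tmul, LinearMap.mul'_apply]
        rw [Finset.sum_congr rfl this]
        exact HopfAux.sum_mul_Sinv Sinv hS₁' hS₂' rx
      have Vlem : ∀ w : H, φ' (Coalgebra.comul (R := k) w) = (1 : H) ⊗ₜ[k] w := by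
        intro w
        rw [hφ']
        simp only [LinearMap.comp_apply]
        rw [LinearEquiv.coe_coe, Coalgebra.coassoc_symm_apply, ← LinearMap.rTensor_comp_apply]
        set rw := Coalgebra.Repr.arbitrary k w
        rw [← rw.eq, map_sum]
        have : ∀ n ∈ rw.index,
            (LinearMap.rTensor H (inner1 ∘ₗ Coalgebra.comul (R := k))) (rw.left n ⊗ₜ[k] rw.right n)
            = ((Coalgebra.counit (R := k) (rw.left n)) • (1 : H)) ⊗ₜ[k] rw.right n := by
          intro n _
          rw [LinearMap.rTensor_tmul, LinearMap.comp_apply, innercomul,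
            Algebra.algebraMap_eq_smul_one]
        rw [Finset.sum_congr rfl this]
        calc ∑ n ∈ rw.index, ((Coalgebra.counit (R := k) (rw.left n)) • (1 : H)) ⊗ₜ[k] rw.right n
            = (1 : H) ⊗ₜ[k] (∑ n ∈ rw.index, Coalgebra.counit (R := k) (rw.left n) • rw.right n) := by
              rw [TensorProduct.tmul_sum]
              exact Finset.sum_congr rfl fun n _ => by rw [TensorProduct.smul_tmul]
          _ = (1 : H) ⊗ₜ[k] w := by rw [HopfAux.sum_counit_smul_right rw]
      set pairAct : (H ⊗[k] H) ⊗[k] C →ₗ[k] C :=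
        TensorProduct.lift (actL k A C)
          ∘ₗ TensorProduct.map ((actL k H A).flip a) (TensorProduct.lift (actL k H C))
          ∘ₗ (TensorProduct.assoc k H H C).toLinearMap with hpairAct
      have pairAct_tmul : ∀ (u v : H) (c : C),
          pairAct ((u ⊗ₜ[k] v) ⊗ₜ[k] c) = (u • a) • (v • c) := by
        intro u v c
        simp only [hpairAct, LinearMap.comp_apply, LinearEquiv.coe_coe,
          TensorProduct.assoc_tmul, TensorProduct.map_tmul, TensorProduct.lift.tmul,
          LinearMap.flip_apply, actL_apply]
      set Λ : H ⊗[k] (H ⊗[k] H) →ₗ[k] C :=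
        pairAct ∘ₗ TensorProduct.map φ' cmap ∘ₗ (TensorProduct.comm k H (H ⊗[k] H)).toLinearMap
        with hΛ
      have Λ_apply : ∀ (x : H) (yw : H ⊗[k] H),
          Λ (x ⊗ₜ[k] yw) = pairAct (φ' yw ⊗ₜ[k] cmap x) := by
        intro x yw
        simp only [hΛ, LinearMap.comp_apply, LinearEquiv.coe_coe, TensorProduct.comm_tmul,
          TensorProduct.map_tmul]
      -- expand LHS
      have step1 : ∀ i ∈ r.index,
          r.right i • γ' ((Sinv (r.left i) • (a • z)) ⊗ₜ[k] (1 : H))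
          = ∑ j ∈ (ρ i).index, ∑ m ∈ (σ i).index,
              (((σ i).left m * Sinv ((ρ i).right j)) • a) • ((σ i).right m • cmap ((ρ i).left j)) := by
        intro i _
        have e1 : Sinv (r.left i) • (a • z)
            = ∑ j ∈ (ρ i).index, (Sinv ((ρ i).right j) • a) • (Sinv ((ρ i).left j) • z) := by
          have := smash_repr k H A hZ (HopfAux.SinvRepr Sinv hS₁' hS₂' (ρ i)) a z
          simpa [HopfAux.SinvRepr] using this
        rw [e1, TensorProduct.sum_tmul, map_sum, Finset.smul_sum]
        refine Finset.sum_congr rfl fun j _ => ?_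
        have e2 : ((Sinv ((ρ i).right j) • a) • (Sinv ((ρ i).left j) • z)) ⊗ₜ[k] (1 : H)
            = TensorProduct.map (actL k A Z (Sinv ((ρ i).right j) • a)) LinearMap.id
                ((Sinv ((ρ i).left j) • z) ⊗ₜ[k] (1 : H)) := by
          rw [TensorProduct.map_tmul, actL_apply, LinearMap.id_coe, id_eq]
        rw [e2, hγ'A, smash_repr k H A hC (σ i)]
        refine Finset.sum_congr rfl fun m _ => ?_
        rw [← mul_smul, cmap_apply]
      rw [Finset.sum_congr rfl step1]
      -- rewrite via Λ and coassociativity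
      have key := congrArg Λ (Coalgebra.sum_tmul_tmul_eq r ρ σ)
      simp only [map_sum] at key
      have ΛL : ∀ (x y w : H) (rw : Coalgebra.Repr k w (H × H)),
          Λ (x ⊗ₜ[k] (y ⊗ₜ[k] w))
          = ∑ m ∈ rw.index, ((rw.left m * Sinv y) • a) • (rw.right m • cmap x) := by
        intro x y w rw
        rw [Λ_apply, φ'_tmul y w rw, TensorProduct.sum_tmul, map_sum]
        exact Finset.sum_congr rfl fun m _ => pairAct_tmul _ _ _
      calc ∑ i ∈ r.index, ∑ j ∈ (ρ i).index, ∑ m ∈ (σ i).index,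
              (((σ i).left m * Sinv ((ρ i).right j)) • a) • ((σ i).right m • cmap ((ρ i).left j))
          = ∑ i ∈ r.index, ∑ j ∈ (ρ i).index,
              Λ ((ρ i).left j ⊗ₜ[k] ((ρ i).right j ⊗ₜ[k] r.right i)) := by
            exact Finset.sum_congr rfl fun i _ => Finset.sum_congr rfl fun j _ =>
              (ΛL _ _ _ (σ i)).symm
        _ = ∑ i ∈ r.index, ∑ m ∈ (σ i).index,
              Λ (r.left i ⊗ₜ[k] ((σ i).left m ⊗ₜ[k] (σ i).right m)) := key
        _ = ∑ i ∈ r.index, a • (r.right i • cmap (r.left i)) := by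
            refine Finset.sum_congr rfl fun i _ => ?_
            have : ∑ m ∈ (σ i).index, Λ (r.left i ⊗ₜ[k] ((σ i).left m ⊗ₜ[k] (σ i).right m))
                = pairAct (((1 : H) ⊗ₜ[k] r.right i) ⊗ₜ[k] cmap (r.left i)) := by
              have e3 : ∑ m ∈ (σ i).index,
                  Λ (r.left i ⊗ₜ[k] ((σ i).left m ⊗ₜ[k] (σ i).right m))
                  = pairAct ((φ' (Coalgebra.comul (R := k) (r.right i))) ⊗ₜ[k] cmap (r.left i)) := by
                rw [← (σ i).eq, map_sum, TensorProduct.sum_tmul, map_sum]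
                exact Finset.sum_congr rfl fun m _ => Λ_apply _ _
              rw [e3, Vlem]
            rw [this, pairAct_tmul, one_smul]
        _ = a • ∑ i ∈ r.index, r.right i • γ' ((Sinv (r.left i) • z) ⊗ₜ[k] (1 : H)) := by
            rw [Finset.smul_sum]
            exact Finset.sum_congr rfl fun i _ => by rw [cmap_apply]
  · -- H-linearity
    intro h' x
    induction x using TensorProduct.induction_on with
    | zero => simp
    | add u v hu hv => rw [map_add, map_add, hu, hv, map_add, smul_add]
    | tmul z h =>
      set r := Coalgebra.Repr.arbitrary k h with hrdef
      set t := Coalgebra.Repr.arbitrary k h' with htdef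
      set uu : ∀ p : t.ι, Coalgebra.Repr k (t.left p) (H × H) :=
        fun p => Coalgebra.Repr.arbitrary k (t.left p) with huudef
      set vv : ∀ p : t.ι, Coalgebra.Repr k (t.right p) (H × H) :=
        fun p => Coalgebra.Repr.arbitrary k (t.right p) with hvvdef
      rw [tenActVia_repr k H _ _ t, map_sum]
      have expand : ∀ p ∈ t.index,
          gammaMap k H C Z Sinv γ' ((actL k H Z (t.left p) z) ⊗ₜ[k] (actL k H H (t.right p) h))
          = ∑ q ∈ (vv p).index, ∑ i ∈ r.index,
              ((vv p).right q * r.right i) •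
                γ' ((Sinv (r.left i) • (Sinv ((vv p).left q) • (t.left p • z))) ⊗ₜ[k] (1 : H)) := by
        intro p _
        rw [actL_apply, actL_apply, smul_eq_mul]
        rw [gammaMap_repr k H C Z Sinv γ' _ (HopfAux.mulRepr (vv p) r)]
        simp only [HopfAux.mulRepr]
        rw [Finset.sum_product]
        refine Finset.sum_congr rfl fun q _ => Finset.sum_congr rfl fun i _ => ?_
        show ((vv p).right q * r.right i) •
            γ' ((Sinv ((vv p).left q * r.left i) • (t.left p • z)) ⊗ₜ[k] (1 : H)) = _
        rw [HopfAux.Sinv_mul Sinv hS₁' hS₂', mul_smul,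
          mul_smul (Sinv (r.left i)) (Sinv ((vv p).left q)) (t.left p • z),
          mul_smul ((vv p).right q) (r.right i)]
      rw [Finset.sum_congr rfl expand]
      -- per-i linear maps
      set B : H →ₗ[k] H →ₗ[k] Z :=
        ((actL k H Z ∘ₗ Sinv).flip) ∘ₗ ((actL k H Z).flip z) with hB
      have B_apply : ∀ x y : H, B x y = Sinv y • (x • z) := fun x y => rfl
      set K : r.ι → (H ⊗[k] H →ₗ[k] C) := fun i =>
        γ' ∘ₗ ((TensorProduct.mk k Z H).flip 1) ∘ₗ (actL k H Z (Sinv (r.left i)))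
          ∘ₗ TensorProduct.lift B with hK
      set ΨI : r.ι → (H ⊗[k] (H ⊗[k] H) →ₗ[k] C) := fun i =>
        TensorProduct.lift (actL k H C)
          ∘ₗ TensorProduct.map (LinearMap.mulRight k (r.right i)) (K i)
          ∘ₗ (TensorProduct.comm k (H ⊗[k] H) H).toLinearMap
          ∘ₗ (TensorProduct.assoc k H H H).symm.toLinearMap with hΨI
      have ΨI_apply : ∀ (i : r.ι) (x y w : H),
          ΨI i (x ⊗ₜ[k] (y ⊗ₜ[k] w))
          = (w * r.right i) • γ' ((Sinv (r.left i) • (Sinv y • (x • z))) ⊗ₜ[k] (1 : H)) := by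
        intro i x y w
        simp only [hΨI, hK, LinearMap.comp_apply, LinearEquiv.coe_coe,
          TensorProduct.assoc_symm_tmul, TensorProduct.comm_tmul, TensorProduct.map_tmul,
          TensorProduct.lift.tmul, LinearMap.mulRight_apply, actL_apply,
          LinearMap.flip_apply, TensorProduct.mk_apply, hB]
      have key := Coalgebra.sum_tmul_tmul_eq t uu vv
      calc ∑ p ∈ t.index, ∑ q ∈ (vv p).index, ∑ i ∈ r.index,
              ((vv p).right q * r.right i) •
                γ' ((Sinv (r.left i) • (Sinv ((vv p).left q) • (t.left p • z))) ⊗ₜ[k] (1 : H))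
          = ∑ i ∈ r.index, ∑ p ∈ t.index, ∑ q ∈ (vv p).index,
              ΨI i (t.left p ⊗ₜ[k] ((vv p).left q ⊗ₜ[k] (vv p).right q)) := by
            have e : ∀ p ∈ t.index,
                ∑ q ∈ (vv p).index, ∑ i ∈ r.index,
                  ((vv p).right q * r.right i) •
                    γ' ((Sinv (r.left i) • (Sinv ((vv p).left q) • (t.left p • z))) ⊗ₜ[k] (1 : H))
                = ∑ i ∈ r.index, ∑ q ∈ (vv p).index,
                    ΨI i (t.left p ⊗ₜ[k] ((vv p).left q ⊗ₜ[k] (vv p).right q)) := by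
              intro p _
              rw [Finset.sum_comm]
              exact Finset.sum_congr rfl fun i _ => Finset.sum_congr rfl fun q _ =>
                (ΨI_apply i _ _ _).symm
            rw [Finset.sum_congr rfl e, Finset.sum_comm]
        _ = ∑ i ∈ r.index, ∑ p ∈ t.index, ∑ s ∈ (uu p).index,
              ΨI i ((uu p).left s ⊗ₜ[k] ((uu p).right s ⊗ₜ[k] t.right p)) := by
            refine Finset.sum_congr rfl fun i _ => ?_
            have := congrArg (ΨI i) key
            simp only [map_sum] at this
            exact this.symm
        _ = ∑ i ∈ r.index, ∑ p ∈ t.index, Coalgebra.counit (R := k) (t.left p) •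
              ((t.right p * r.right i) • γ' ((Sinv (r.left i) • z) ⊗ₜ[k] (1 : H))) := by
            refine Finset.sum_congr rfl fun i _ => Finset.sum_congr rfl fun p _ => ?_
            set Θ : Z →ₗ[k] C :=
              (actL k H C (t.right p * r.right i)) ∘ₗ γ'
                ∘ₗ ((TensorProduct.mk k Z H).flip 1) ∘ₗ actL k H Z (Sinv (r.left i)) with hΘ
            have Θ_apply : ∀ z' : Z,
                Θ z' = (t.right p * r.right i) • γ' ((Sinv (r.left i) • z') ⊗ₜ[k] (1 : H)) :=
              fun z' => rfl
            calc ∑ s ∈ (uu p).index, ΨI i ((uu p).left s ⊗ₜ[k] ((uu p).right s ⊗ₜ[k] t.right p))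
                = ∑ s ∈ (uu p).index, Θ ((Sinv ((uu p).right s) * (uu p).left s) • z) := by
                  refine Finset.sum_congr rfl fun s _ => ?_
                  rw [ΨI_apply, Θ_apply, mul_smul (Sinv ((uu p).right s)) ((uu p).left s) z]
              _ = Θ ((∑ s ∈ (uu p).index, Sinv ((uu p).right s) * (uu p).left s) • z) := by
                  rw [Finset.sum_smul, map_sum]
              _ = Coalgebra.counit (R := k) (t.left p) •
                    ((t.right p * r.right i) • γ' ((Sinv (r.left i) • z) ⊗ₜ[k] (1 : H))) := by
                  rw [HopfAux.sum_Sinv_mul Sinv hS₁' hS₂' (uu p), algebraMap_smul, map_smul,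
                    Θ_apply]
        _ = ∑ i ∈ r.index, (h' * r.right i) • γ' ((Sinv (r.left i) • z) ⊗ₜ[k] (1 : H)) := by
            refine Finset.sum_congr rfl fun i _ => ?_
            set Ω : H →ₗ[k] C :=
              ((actL k H C).flip (γ' ((Sinv (r.left i) • z) ⊗ₜ[k] (1 : H))))
                ∘ₗ (LinearMap.mulRight k (r.right i)) with hΩ
            have Ω_apply : ∀ v : H,
                Ω v = (v * r.right i) • γ' ((Sinv (r.left i) • z) ⊗ₜ[k] (1 : H)) := fun v => rfl
            calc ∑ p ∈ t.index, Coalgebra.counit (R := k) (t.left p) •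
                    ((t.right p * r.right i) • γ' ((Sinv (r.left i) • z) ⊗ₜ[k] (1 : H)))
                = ∑ p ∈ t.index, Coalgebra.counit (R := k) (t.left p) • Ω (t.right p) := by
                  exact Finset.sum_congr rfl fun p _ => by rw [Ω_apply]
              _ = Ω (∑ p ∈ t.index, Coalgebra.counit (R := k) (t.left p) • t.right p) := by
                  rw [map_sum]
                  exact Finset.sum_congr rfl fun p _ => by rw [map_smul]
              _ = (h' * r.right i) • γ' ((Sinv (r.left i) • z) ⊗ₜ[k] (1 : H)) := by
                  rw [HopfAux.sum_counit_smul_right t, Ω_apply]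
        _ = h' • gammaMap k H C Z Sinv γ' (z ⊗ₜ[k] h) := by
            rw [gammaMap_repr k H C Z Sinv γ' z r, Finset.smul_sum]
            exact Finset.sum_congr rfl fun i _ => by rw [mul_smul]
  · -- section
    intro x
    induction x using TensorProduct.induction_on with
    | zero => simp
    | add u v hu hv => rw [map_add, map_add, hu, hv]
    | tmul z h =>
      set r := Coalgebra.Repr.arbitrary k h with hrdef
      set ρ : ∀ i : r.ι, Coalgebra.Repr k (r.left i) (H × H) :=
        fun i => Coalgebra.Repr.arbitrary k (r.left i) with hρdef
      set σ : ∀ i : r.ι, Coalgebra.Repr k (r.right i) (H × H) :=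
        fun i => Coalgebra.Repr.arbitrary k (r.right i) with hσdef
      rw [gammaMap_repr k H C Z Sinv γ' z r, map_sum]
      have step1 : ∀ i ∈ r.index,
          β (r.right i • γ' ((Sinv (r.left i) • z) ⊗ₜ[k] (1 : H)))
          = ∑ m ∈ (σ i).index, (((σ i).left m * Sinv (r.left i)) • z) ⊗ₜ[k] (σ i).right m := by
        intro i _
        rw [hβH, hsec, tenActVia_repr k H _ _ (σ i)]
        refine Finset.sum_congr rfl fun m _ => ?_
        rw [actL_apply, actL_apply, ← mul_smul, smul_eq_mul, mul_one]
      rw [Finset.sum_congr rfl step1]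
      set Fz : H ⊗[k] H →ₗ[k] Z :=
        ((actL k H Z).flip z) ∘ₗ LinearMap.mul' k H ∘ₗ (TensorProduct.comm k H H).toLinearMap
          ∘ₗ LinearMap.rTensor H Sinv with hFz
      set Ξ : H ⊗[k] (H ⊗[k] H) →ₗ[k] Z ⊗[k] H :=
        TensorProduct.map Fz LinearMap.id ∘ₗ (TensorProduct.assoc k H H H).symm.toLinearMap
        with hΞ
      have Ξ_apply : ∀ x y w : H, Ξ (x ⊗ₜ[k] (y ⊗ₜ[k] w)) = ((y * Sinv x) • z) ⊗ₜ[k] w := by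
        intro x y w
        simp only [hΞ, hFz, LinearMap.comp_apply, LinearEquiv.coe_coe,
          TensorProduct.assoc_symm_tmul, TensorProduct.map_tmul, LinearMap.rTensor_tmul,
          TensorProduct.comm_tmul, LinearMap.mul'_apply, LinearMap.flip_apply, actL_apply,
          LinearMap.id_coe, id_eq]
      have key := congrArg Ξ (Coalgebra.sum_tmul_tmul_eq r ρ σ)
      simp only [map_sum] at key
      calc ∑ i ∈ r.index, ∑ m ∈ (σ i).index,
              (((σ i).left m * Sinv (r.left i)) • z) ⊗ₜ[k] (σ i).right m
          = ∑ i ∈ r.index, ∑ m ∈ (σ i).index,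
              Ξ (r.left i ⊗ₜ[k] ((σ i).left m ⊗ₜ[k] (σ i).right m)) := by
            exact Finset.sum_congr rfl fun i _ => Finset.sum_congr rfl fun m _ =>
              (Ξ_apply _ _ _).symm
        _ = ∑ i ∈ r.index, ∑ j ∈ (ρ i).index,
              Ξ ((ρ i).left j ⊗ₜ[k] ((ρ i).right j ⊗ₜ[k] r.right i)) := key.symm
        _ = ∑ i ∈ r.index, (Coalgebra.counit (R := k) (r.left i) • z) ⊗ₜ[k] r.right i := by
            refine Finset.sum_congr rfl fun i _ => ?_
            calc ∑ j ∈ (ρ i).index, Ξ ((ρ i).left j ⊗ₜ[k] ((ρ i).right j ⊗ₜ[k] r.right i))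
                = ((∑ j ∈ (ρ i).index, (ρ i).right j * Sinv ((ρ i).left j)) • z)
                    ⊗ₜ[k] r.right i := by
                  rw [Finset.sum_smul, TensorProduct.sum_tmul]
                  exact Finset.sum_congr rfl fun j _ => by rw [Ξ_apply]
              _ = (Coalgebra.counit (R := k) (r.left i) • z) ⊗ₜ[k] r.right i := by
                  rw [HopfAux.sum_mul_Sinv Sinv hS₁' hS₂' (ρ i), algebraMap_smul]
        _ = z ⊗ₜ[k] h := by
            calc ∑ i ∈ r.index, (Coalgebra.counit (R := k) (r.left i) • z) ⊗ₜ[k] r.right i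
                = z ⊗ₜ[k] (∑ i ∈ r.index, Coalgebra.counit (R := k) (r.left i) • r.right i) := by
                  rw [TensorProduct.tmul_sum]
                  exact Finset.sum_congr rfl fun i _ => by rw [TensorProduct.smul_tmul]
              _ = z ⊗ₜ[k] h := by rw [HopfAux.sum_counit_smul_right r]


end Hopfological
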